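/- The Jacobian determinant of the map (x_1, ..., x_N, w_1, ..., w_N) ↦ (m_1, ..., m_{2N-1}, w_1 + ... + w_N), where m_j = Σ_k w_k x_k^j, equals (∏_{k=1}^N w_k)·Δ(x_1, ..., x_N)^4 up to sign, where Δ is the Vandermonde determinant. -/

import Mathlib

open Matrix

/-- The Jacobian matrix of the map `(x₁,…,x_N,w₁,…,w_N) ↦ (m₁,…,m_{2N-1}, ∑ w_k)`,
where `m_j = ∑_k w_k x_k^j`.  The first `2N-1` rows correspond to the moments
`m₁,…,m_{2N-1}` and the last row to `w₁ + ⋯ + w_N`; even-indexed columns are the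
`∂/∂w_k` columns and odd-indexed columns the `∂/∂x_k` columns. -/
noncomputable def momentSumJacobian (N : ℕ) (x w : Fin N → ℝ) :
    Matrix (Fin (2 * N)) (Fin (2 * N)) ℝ :=
  Matrix.of fun j c =>
    if j.1 + 1 < 2 * N then
      (if c.1 % 2 = 0 then x ⟨c.1 / 2, by omega⟩ ^ (j.1 + 1)
       else ((j.1 : ℝ) + 1) * w ⟨c.1 / 2, by omega⟩ * x ⟨c.1 / 2, by omega⟩ ^ j.1)
    else (if c.1 % 2 = 0 then 1 else 0)

open Polynomial Finset

namespace MSJaux2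

variable (N : ℕ) (x : Fin N → ℝ)

noncomputable def pv : Fin (2*N) → ℝ[X] := fun i =>
  C (x ⟨i.1/2, by omega⟩) + if i.1 % 2 = 1 then X else 0

noncomputable def pB : Matrix (Fin (2*N)) (Fin (2*N)) ℝ[X] :=
  Matrix.of fun i c =>
    if c.1 % 2 = 0 then C (x ⟨c.1/2, by omega⟩) ^ i.1
    else ∑ a ∈ Finset.range i.1,
      (C (x ⟨c.1/2, by omega⟩) + X) ^ a * C (x ⟨c.1/2, by omega⟩) ^ (i.1 - 1 - a)

noncomputable def pE : Matrix (Fin (2*N)) (Fin (2*N)) ℝ[X] :=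
  Matrix.of fun d c =>
    if d = c then (if c.1 % 2 = 1 then X else 1)
    else if c.1 % 2 = 1 ∧ d.1 + 1 = c.1 then 1 else 0

lemma hVBE : (vandermonde (pv N x))ᵀ = pB N x * pE N := by
  apply Matrix.ext
  intro i c
  rw [transpose_apply, vandermonde_apply, Matrix.mul_apply]
  by_cases hc : c.1 % 2 = 0
  · have : ∀ d, pB N x i d * pE N d c = if d = c then pB N x i c else 0 := by
      intro d
      simp only [pE, Matrix.of_apply, hc]
      split_ifs with h1 h2 <;> simp_all <;> omega
    rw [Finset.sum_congr rfl (fun d _ => this d), Finset.sum_ite_eq' _ c]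
    simp [pB, pv, hc]
  · have hc1 : c.1 % 2 = 1 := by omega
    set c' : Fin (2*N) := ⟨c.1 - 1, by omega⟩ with hc'
    have hne : c' ≠ c := by simp [hc', Fin.ext_iff]; omega
    have : ∀ d, pB N x i d * pE N d c =
        (if d = c then pB N x i c * X else 0) + (if d = c' then pB N x i c' else 0) := by
      intro d
      simp only [pE, Matrix.of_apply, hc1]
      by_cases h1 : d = c
      · subst h1; simp [hne.symm, hc1]
      · by_cases h2 : d = c'
        · subst h2; simp [hne, hc', hc1]; rw [if_neg (by simpa [hc'] using hne), if_pos (by omega : c.1 - 1 + 1 = c.1)]; simp; intro h; exact absurd h (by simpa [hc'] using hne)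
        · have : ¬ (d.1 + 1 = c.1) := by
            intro h; apply h2; simp [hc', Fin.ext_iff]; omega
          simp [h1, h2, this]
    rw [Finset.sum_congr rfl (fun d _ => this d), Finset.sum_add_distrib,
      Finset.sum_ite_eq' _ c, Finset.sum_ite_eq' _ c']
    have hxeq : (⟨c'.1/2, by omega⟩ : Fin N) = ⟨c.1/2, by omega⟩ := by
      rw [Fin.mk_eq_mk]; simp only [hc']; omega
    have hkey := geom_sum₂_mul (C (x ⟨c.1/2, by omega⟩) + X) (C (x ⟨c.1/2, by omega⟩)) i.1
    have hc'0 : ¬ c'.1 % 2 = 0 → False := by simp [hc']; omega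
    simp only [pB, pv, Matrix.of_apply, hc1, if_neg (by omega : ¬ c.1 % 2 = 0),
      if_pos (by simp only [hc']; omega : c'.1 % 2 = 0), Finset.mem_univ, if_true, hxeq]
    rw [if_neg (by norm_num : ¬ (1:ℕ) = 0)]
    linear_combination -hkey

lemma card_even (N : ℕ) : (Finset.univ.filter (fun i : Fin (2*N) => i.1 % 2 = 0)).card = N := by
  have h : (Finset.univ.filter (fun i : Fin (2*N) => i.1 % 2 = 0)).card
      = (Finset.univ : Finset (Fin N)).card := by
    refine Finset.card_nbij' (fun (i : Fin (2*N)) => (⟨i.1/2, by omega⟩ : Fin N))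
      (fun (k : Fin N) => (⟨2*k.1, by omega⟩ : Fin (2*N)))
      ?_ ?_ ?_ ?_ <;> intro a ha <;> simp_all [Fin.ext_iff] <;> omega
  simp [h]

lemma card_odd (N : ℕ) : (Finset.univ.filter (fun i : Fin (2*N) => i.1 % 2 = 1)).card = N := by
  have h : (Finset.univ.filter (fun i : Fin (2*N) => i.1 % 2 = 1)).card
      = (Finset.univ : Finset (Fin N)).card := by
    refine Finset.card_nbij' (fun (i : Fin (2*N)) => (⟨i.1/2, by omega⟩ : Fin N))
      (fun (k : Fin N) => (⟨2*k.1+1, by omega⟩ : Fin (2*N)))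
      ?_ ?_ ?_ ?_ <;> intro a ha <;> simp_all [Fin.ext_iff] <;> omega
  simp [h]

lemma prod_parity {M : Type*} [CommMonoid M] (N : ℕ) (r : M) (b : ℕ) (hb : b < 2) :
    (∏ i : Fin (2*N), (if i.1 % 2 = b then r else 1)) = r ^ N := by
  rw [Finset.prod_ite, Finset.prod_const, Finset.prod_const_one, mul_one]
  interval_cases b
  · rw [card_even]
  · rw [card_odd]

lemma hdetE : (pE N).det = X ^ N := by
  rw [Matrix.det_of_upperTriangular]
  · have : ∀ c : Fin (2*N), pE N c c = if c.1 % 2 = 1 then X else 1 := by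
      intro c; simp [pE]
    rw [Finset.prod_congr rfl (fun c _ => this c)]
    exact prod_parity N X 1 (by norm_num)
  · intro i j hij
    simp only [pE, Matrix.of_apply]
    rw [if_neg, if_neg]
    · rintro ⟨-, h⟩; exact absurd h (by simp at hij ⊢; omega)
    · rintro rfl; exact absurd hij (lt_irrefl _)

/-- the blockwise factor -/
noncomputable def q (i j : Fin (2*N)) : ℝ[X] :=
  if i.1 / 2 = j.1 / 2 then 1 else pv N x j - pv N x i

lemma hdetB : (pB N x).det = ∏ i, ∏ j ∈ Finset.Ioi i, q N x i j := by
  have h1 : (pB N x).det * X ^ N = (∏ i, ∏ j ∈ Finset.Ioi i, q N x i j) * X ^ N := by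
    calc (pB N x).det * X ^ N = ((vandermonde (pv N x))ᵀ).det := by
          rw [hVBE, Matrix.det_mul, hdetE]
      _ = ∏ i, ∏ j ∈ Finset.Ioi i, (pv N x j - pv N x i) := by
          rw [Matrix.det_transpose, Matrix.det_vandermonde]
      _ = ∏ i, ∏ j ∈ Finset.Ioi i, ((if i.1 / 2 = j.1 / 2 then X else 1) * q N x i j) := by
          refine Finset.prod_congr rfl fun i _ => Finset.prod_congr rfl fun j hj => ?_
          rw [Finset.mem_Ioi, Fin.lt_def] at hj
          by_cases h : i.1 / 2 = j.1 / 2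
          · have hj1 : j.1 = i.1 + 1 ∧ i.1 % 2 = 0 := by omega
            have : pv N x j - pv N x i = X := by
              have : (⟨j.1/2, by omega⟩ : Fin N) = ⟨i.1/2, by omega⟩ := by
                rw [Fin.mk_eq_mk]; omega
              simp [pv, this, if_pos (by omega : j.1 % 2 = 1),
                if_neg (by omega : ¬ i.1 % 2 = 1)]
            rw [this, if_pos h, q, if_pos h, mul_one]
          · rw [if_neg h, q, if_neg h, one_mul]
      _ = (∏ i : Fin (2*N), ∏ j ∈ Finset.Ioi i, (if i.1 / 2 = j.1 / 2 then X else (1:ℝ[X]))) *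
            ∏ i, ∏ j ∈ Finset.Ioi i, q N x i j := by
          rw [← Finset.prod_mul_distrib]
          exact Finset.prod_congr rfl fun i _ => Finset.prod_mul_distrib
      _ = X ^ N * ∏ i, ∏ j ∈ Finset.Ioi i, q N x i j := by
          congr 1
          have hinner : ∀ i : Fin (2*N),
              (∏ j ∈ Finset.Ioi i, (if i.1 / 2 = j.1 / 2 then X else (1:ℝ[X])))
                = if i.1 % 2 = 0 then X else 1 := by
            intro i
            by_cases hi : i.1 % 2 = 0
            · rw [if_pos hi]
              have hmem : (⟨i.1 + 1, by omega⟩ : Fin (2*N)) ∈ Finset.Ioi i := by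
                simp [Fin.lt_def]
              refine Finset.prod_eq_single_of_mem _ hmem ?_ |>.trans ?_
              · intro j hj hne
                rw [Finset.mem_Ioi, Fin.lt_def] at hj
                rw [if_neg]
                intro h
                exact hne (by rw [Fin.ext_iff]; simp only [Fin.val_mk] at h ⊢; omega)
              · rw [if_pos (show i.1/2 = (i.1+1)/2 by omega)]
            · rw [if_neg hi]
              refine Finset.prod_eq_one fun j hj => ?_
              rw [Finset.mem_Ioi, Fin.lt_def] at hj
              rw [if_neg (by omega)]
          rw [Finset.prod_congr rfl (fun i _ => hinner i)]
          exact prod_parity N X 0 (by norm_num)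
      _ = (∏ i, ∏ j ∈ Finset.Ioi i, q N x i j) * X ^ N := mul_comm _ _
  exact mul_right_cancel₀ (pow_ne_zero _ Polynomial.X_ne_zero) h1

noncomputable def rB : Matrix (Fin (2*N)) (Fin (2*N)) ℝ :=
  Matrix.of fun i c =>
    if c.1 % 2 = 0 then x ⟨c.1/2, by omega⟩ ^ i.1
    else (i.1 : ℝ) * x ⟨c.1/2, by omega⟩ ^ (i.1 - 1)

lemma pv_eval (i : Fin (2*N)) : Polynomial.eval 0 (pv N x i) = x ⟨i.1/2, by omega⟩ := by
  simp [pv, apply_ite (Polynomial.eval (0:ℝ))]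

lemma hmapB : (pB N x).map (Polynomial.eval 0) = rB N x := by
  apply Matrix.ext
  intro i c
  simp only [Matrix.map_apply, pB, rB, Matrix.of_apply]
  split_ifs with h
  · simp
  · rw [Polynomial.eval_finset_sum]
    have : ∀ a ∈ Finset.range i.1,
        Polynomial.eval 0 ((C (x ⟨c.1/2, by omega⟩) + X) ^ a * C (x ⟨c.1/2, by omega⟩) ^ (i.1 - 1 - a))
          = x ⟨c.1/2, by omega⟩ ^ (i.1 - 1) := by
      intro a ha
      rw [Finset.mem_range] at ha
      simp only [Polynomial.eval_mul, Polynomial.eval_pow, Polynomial.eval_add,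
        Polynomial.eval_C, Polynomial.eval_X, add_zero, ← pow_add]
      congr 1
      omega
    rw [Finset.sum_congr rfl this, Finset.sum_const, Finset.card_range, nsmul_eq_mul]

lemma hdetrB : (rB N x).det
    = ∏ i : Fin (2*N), ∏ j ∈ Finset.Ioi i,
        (if i.1 / 2 = j.1 / 2 then 1 else x ⟨j.1/2, by omega⟩ - x ⟨i.1/2, by omega⟩) := by
  have h := RingHom.map_det (Polynomial.evalRingHom (0:ℝ)) (pB N x)
  have h2 : (Polynomial.evalRingHom (0:ℝ)).mapMatrix (pB N x) = rB N x := hmapB N x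
  rw [h2] at h
  rw [← h, hdetB, map_prod]
  refine Finset.prod_congr rfl fun i _ => ?_
  rw [map_prod]
  refine Finset.prod_congr rfl fun j hj => ?_
  simp only [q, apply_ite (Polynomial.evalRingHom (0:ℝ)), _root_.map_one, map_sub]
  congr 1
  rw [Polynomial.coe_evalRingHom, pv_eval, pv_eval]

lemma comb :
    (∏ i : Fin (2*N), ∏ j ∈ Finset.Ioi i,
        (if i.1 / 2 = j.1 / 2 then 1 else x ⟨j.1/2, by omega⟩ - x ⟨i.1/2, by omega⟩))
      = ∏ k : Fin N, ∏ l ∈ Finset.Ioi k, (x l - x k) ^ 4 := by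
  rw [Finset.prod_sigma' (Finset.univ : Finset (Fin (2*N)))]
  rw [Finset.prod_sigma' (Finset.univ : Finset (Fin N))]
  rw [Finset.prod_ite (fun _ => (1:ℝ)) _, Finset.prod_const_one, one_mul]
  have hRHS : ∀ y : (_ : Fin N) × Fin N, (x y.2 - x y.1) ^ 4
      = ∏ _ab ∈ (Finset.univ : Finset (Fin 2 × Fin 2)), (x y.2 - x y.1) := by
    intro y; simp
  rw [Finset.prod_congr rfl (fun y _ => hRHS y),
    ← Finset.prod_product (f := fun z : ((_ : Fin N) × Fin N) × (Fin 2 × Fin 2) =>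
      x z.1.2 - x z.1.1)]
  refine Finset.prod_nbij'
    (fun p => ((⟨(⟨p.1.1/2, by omega⟩ : Fin N), (⟨p.2.1/2, by omega⟩ : Fin N)⟩ :
        (_ : Fin N) × Fin N),
       ((⟨p.1.1 % 2, by omega⟩ : Fin 2), (⟨p.2.1 % 2, by omega⟩ : Fin 2))))
    (fun y => (⟨(⟨2*y.1.1.1 + y.2.1.1, by omega⟩ : Fin (2*N)),
        (⟨2*y.1.2.1 + y.2.2.1, by omega⟩ : Fin (2*N))⟩ : (_ : Fin (2*N)) × Fin (2*N)))
    ?_ ?_ ?_ ?_ ?_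
  · intro p hp
    simp only [Finset.mem_filter, Finset.mem_sigma, Finset.mem_Ioi, Fin.lt_def,
      Finset.mem_product, Finset.mem_univ, true_and, and_true] at hp ⊢
    omega
  · intro y hy
    simp only [Finset.mem_filter, Finset.mem_sigma, Finset.mem_Ioi, Fin.lt_def,
      Finset.mem_product, Finset.mem_univ, true_and, and_true] at hy ⊢
    have h2 := y.2.1.2
    have h2' := y.2.2.2
    constructor
    · omega
    · omega
  · intro p hp
    simp only [Finset.mem_filter, Finset.mem_sigma, Finset.mem_Ioi, Fin.lt_def,
      Finset.mem_univ, true_and] at hp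
    refine Sigma.ext ?_ ?_ <;> simp only [heq_eq_eq, Fin.ext_iff, Fin.val_mk] <;> omega
  · intro y hy
    simp only [Finset.mem_product, Finset.mem_sigma, Finset.mem_Ioi, Finset.mem_univ] at hy
    have h2 := y.2.1.2
    have h2' := y.2.2.2
    simp only [Prod.ext_iff, Sigma.ext_iff, Fin.ext_iff, Fin.val_mk, heq_eq_eq]
    refine ⟨⟨by omega, by omega⟩, by omega, by omega⟩
  · intro p hp
    rfl

lemma prod_w (w : Fin N → ℝ) :
    (∏ c : Fin (2*N), (if c.1 % 2 = 0 then 1 else w ⟨c.1/2, by omega⟩)) = ∏ k, w k := by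
  rw [Finset.prod_ite (fun _ => (1:ℝ)) _, Finset.prod_const_one, one_mul]
  refine Finset.prod_nbij' (fun (c : Fin (2*N)) => (⟨c.1/2, by omega⟩ : Fin N))
    (fun (k : Fin N) => (⟨2*k.1+1, by omega⟩ : Fin (2*N))) ?_ ?_ ?_ ?_ ?_ <;>
    intro a ha <;>
    simp_all [Fin.ext_iff] <;> omega

end MSJaux2

open MSJaux2 in
theorem momentSumJacobian_det' (N : ℕ) (hN : 0 < N) (x w : Fin N → ℝ) :
    |(momentSumJacobian N x w).det|
      = |(∏ k, w k) * (∏ j, ∏ k ∈ Finset.Ioi j, (x j - x k)) ^ 4| := by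
  haveI : NeZero (2*N) := ⟨by omega⟩
  set σ : Equiv.Perm (Fin (2*N)) := Equiv.addLeft (1 : Fin (2*N)) with hσ
  set Mw : Matrix (Fin (2*N)) (Fin (2*N)) ℝ := Matrix.of fun i c =>
    (if c.1 % 2 = 0 then 1 else w ⟨c.1/2, by omega⟩) * rB N x i c with hMw
  have hσval : ∀ j : Fin (2*N), (σ j).1 = (1 + j.1) % (2*N) := by
    intro j
    have h : σ j = 1 + j := by simp [hσ]
    rw [h, Fin.add_def, Fin.val_one', Nat.mod_eq_of_lt (show 1 < 2*N by omega)]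
  have hperm : momentSumJacobian N x w = Mw.submatrix σ id := by
    apply Matrix.ext
    intro j c
    simp only [momentSumJacobian, Matrix.submatrix_apply, id_eq, hMw, Matrix.of_apply, rB]
    by_cases hlt : j.1 + 1 < 2*N
    · have h1 : (σ j).1 = j.1 + 1 := by
        rw [hσval, Nat.mod_eq_of_lt (by omega)]
        omega
      rw [if_pos hlt, h1]
      by_cases hc : c.1 % 2 = 0
      · rw [if_pos hc, if_pos hc, if_pos hc, one_mul]
      · rw [if_neg hc, if_neg hc, if_neg hc]
        push_cast
        ring
    · have h1 : (σ j).1 = 0 := by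
        rw [hσval, show 1 + j.1 = 2*N by omega, Nat.mod_self]
      rw [if_neg hlt, h1]
      by_cases hc : c.1 % 2 = 0
      · rw [if_pos hc, if_pos hc, if_pos hc, one_mul, pow_zero]
      · rw [if_neg hc, if_neg hc, if_neg hc]
        norm_num
  rw [hperm, Matrix.det_permute]
  have habs : ∀ d : ℝ, |(Equiv.Perm.sign σ : ℝ) * d| = |d| := by
    intro d
    rcases Int.units_eq_one_or (Equiv.Perm.sign σ) with h | h <;> rw [h] <;> simp
  rw [habs]
  have hMwdet : Mw.det = (∏ k, w k) * (rB N x).det := by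
    rw [hMw, Matrix.det_mul_row, prod_w]
  rw [hMwdet, hdetrB, comb]
  congr 2
  rw [← Finset.prod_pow]
  refine Finset.prod_congr rfl fun k _ => ?_
  rw [← Finset.prod_pow]
  refine Finset.prod_congr rfl fun l _ => ?_
  rw [show x l - x k = -(x k - x l) by ring, Even.neg_pow (by decide)]

/-- The Jacobian determinant of `(x₁,…,x_N,w₁,…,w_N) ↦ (m₁,…,m_{2N-1}, ∑ w_k)`
equals, up to sign, `(∏ w_k)·Δ(x₁,…,x_N)⁴` where `Δ = ∏_{j<k}(x_j - x_k)`. -/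
theorem momentSumJacobian_det (N : ℕ) (hN : 0 < N) (x w : Fin N → ℝ)
    (hx : StrictMono x) (hx01 : ∀ k, x k ∈ Set.Ioo (0 : ℝ) 1)
    (hw : ∀ k, 0 < w k) :
    |(momentSumJacobian N x w).det|
      = |(∏ k, w k) * (∏ j, ∏ k ∈ Finset.Ioi j, (x j - x k)) ^ 4| := by
  exact momentSumJacobian_det' N hN x w
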